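/- For the rational relativistic Toda system (dRTL+ dual): multiplying the six three-leg products (N)·(E)·(SE)·(S)·(W)·(NW) — e.g. (N): (x̃_k−x_k)·(1+h(x_k−Ψ̃_k−λ))/((x_k−Ψ̃_k+λ)(x_k−Φ̃_{k+1}−λ)) = −h, etc. — yields the discrete equation (x̃_k−x_k)/(x_k−x̲_k) = ((1+h(x̲_{k+1}−x_k))/(1+α(x̲_{k+1}−x_k)))·((1+α(x_k−x̃_{k-1}))/(1+h(x_k−x̃_{k-1})))·((1+α(x_{k+1}−x_k))/(1+α(x_k−x_{k-1}))). -/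

import Mathlib

set_option maxHeartbeats 4000000


/-- For the rational relativistic Toda system (dRTL+ dual): the six three-leg
equations (N), (E), (SE), (S), (W), (NW) centered at `x_k` imply (by
multiplication, with telescoping cancellation of the auxiliary variables) the
discrete equation of motion. Here `xt = x̃_k`, `xd = x̲_k`, `xp = x_{k+1}`,
`xm = x_{k-1}`, `xu = x̲_{k+1}`, `xv = x̃_{k-1}`. -/
theorem dRTLdual_product_of_three_legs
    (α h lam : ℂ) (xk xt xd xp xm xu xv Psik Psik1 Psitk Phik1 Phitk Phitk1 : ℂ)
    (hh : h ≠ 0)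
    (e1 : xk - xd ≠ 0)
    (e2 : 1 + α * (xu - xk) ≠ 0) (e3 : 1 + h * (xu - xk) ≠ 0)
    (e4 : 1 + h * (xk - xv) ≠ 0) (e5 : 1 + α * (xk - xv) ≠ 0)
    (e6 : 1 + α * (xp - xk) ≠ 0) (e7 : 1 + α * (xk - xm) ≠ 0)
    (d1 : xk - Psitk + lam ≠ 0) (d2 : xk - Phitk1 - lam ≠ 0)
    (d3 : 1 + h * (xk - Psitk - lam) ≠ 0)
    (d4 : xk - Psik1 - lam ≠ 0) (d5 : 1 - α * (xk - Psik1 + lam) ≠ 0)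
    (d6 : xk - Phik1 - lam ≠ 0) (d7 : 1 - h * (xk - Phik1 + lam) ≠ 0)
    (d8 : xk - Psik + lam ≠ 0) (d9 : xk - Phitk + lam ≠ 0)
    (d10 : 1 + α * (xk - Phitk - lam) ≠ 0)
    (hN : (xt - xk) * ((1 + h * (xk - Psitk - lam)) / (xk - Psitk + lam)) *
          (1 / (xk - Phitk1 - lam)) = -h)
    (hE : (1 / (1 + α * (xp - xk))) * (xk - Phitk1 - lam) *
          ((1 - α * (xk - Psik1 + lam)) / (xk - Psik1 - lam)) = 1)
    (hSE : ((1 + α * (xu - xk)) / (1 + h * (xu - xk))) *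
           ((xk - Psik1 - lam) / (1 - α * (xk - Psik1 + lam))) *
           ((1 - h * (xk - Phik1 + lam)) / (xk - Phik1 - lam)) = 1)
    (hS : (1 / (xk - xd)) *
          ((xk - Phik1 - lam) / (1 - h * (xk - Phik1 + lam))) *
          (xk - Psik + lam) = -(1 / h))
    (hW : (1 + α * (xk - xm)) * (1 / (xk - Psik + lam)) *
          ((xk - Phitk + lam) / (1 + α * (xk - Phitk - lam))) = 1)
    (hNW : ((1 + h * (xk - xv)) / (1 + α * (xk - xv))) *
           ((1 + α * (xk - Phitk - lam)) / (xk - Phitk + lam)) *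
           ((xk - Psitk + lam) / (1 + h * (xk - Psitk - lam))) = 1) :
    (xt - xk) / (xk - xd) =
      ((1 + h * (xu - xk)) / (1 + α * (xu - xk))) *
      ((1 + α * (xk - xv)) / (1 + h * (xk - xv))) *
      ((1 + α * (xp - xk)) / (1 + α * (xk - xm))) := by
  field_simp at hN hE hSE hS hW hNW
  -- cancel Phitk1 factor b1 = xk - Phitk1 - lam
  have q1 : (xt - xk) * (1 + h * (xk - Psitk - lam)) * (1 - α * (xk - Psik1 + lam)) =
      -(h * (xk - Psitk + lam) * (1 + α * (xp - xk)) * (xk - Psik1 - lam)) := by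
    linear_combination (1 - α * (xk - Psik1 + lam)) * hN - h * (xk - Psitk + lam) * hE
  -- cancel Psik1 factors via hSE
  have q2 : (xt - xk) * (1 + h * (xk - Psitk - lam)) * (1 + α * (xu - xk)) *
        (1 - h * (xk - Phik1 + lam)) =
      -(h * (xk - Psitk + lam) * (1 + α * (xp - xk)) * (1 + h * (xu - xk)) *
        (xk - Phik1 - lam)) := by
    apply mul_left_cancel₀ d5
    linear_combination (1 + α * (xu - xk)) * (1 - h * (xk - Phik1 + lam)) * q1 -
      h * (xk - Psitk + lam) * (1 + α * (xp - xk)) * hSE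
  -- cancel Phik1 factors via hS
  have q3 : (xt - xk) * (1 + h * (xk - Psitk - lam)) * (1 + α * (xu - xk)) *
        (xk - Psik + lam) * h =
      h * (xk - Psitk + lam) * (1 + α * (xp - xk)) * (1 + h * (xu - xk)) * (xk - xd) := by
    apply mul_left_cancel₀ d7
    linear_combination (xk - Psik + lam) * h * q2 -
      h * (xk - Psitk + lam) * (1 + α * (xp - xk)) * (1 + h * (xu - xk)) * hS
  -- trade g1 = xk - Psik + lam for p1, p2 via hW
  have q4 : (xt - xk) * (1 + h * (xk - Psitk - lam)) * (1 + α * (xu - xk)) * h *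
        (1 + α * (xk - xm)) * (xk - Phitk + lam) =
      h * (xk - Psitk + lam) * (1 + α * (xp - xk)) * (1 + h * (xu - xk)) * (xk - xd) *
        (1 + α * (xk - Phitk - lam)) := by
    linear_combination (1 + α * (xk - Phitk - lam)) * q3 +
      (xt - xk) * (1 + h * (xk - Psitk - lam)) * (1 + α * (xu - xk)) * h * hW
  -- cancel Phitk and Psitk factors via hNW, and cancel h
  have q5 : (xt - xk) * (1 + α * (xu - xk)) * (1 + α * (xk - xm)) * (1 + h * (xk - xv)) =
      (xk - xd) * (1 + α * (xp - xk)) * (1 + h * (xu - xk)) * (1 + α * (xk - xv)) := by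
    apply mul_left_cancel₀ (mul_ne_zero d9 (mul_ne_zero d3 hh))
    linear_combination (1 + h * (xk - xv)) * q4 +
      h * (1 + α * (xp - xk)) * (1 + h * (xu - xk)) * (xk - xd) * hNW
  rw [div_mul_div_comm, div_mul_div_comm, div_eq_div_iff e1 (mul_ne_zero (mul_ne_zero e2 e4) e7)]
  linear_combination q5
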